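/- For the n×n GUE, the probability that all eigenvalues lie in [a,b] equals K_{GUE} · det(A(a,b)), where A(a,b) has entries a_{i,j} = ∫ₐᵇ t^{i+j−2} e^{−t²} dt for i,j = 1,…,n, and K_{GUE} = 2^{n(n−1)/2} / (π^{n/2} ∏_{i=1}^n Γ(i)). -/

import Mathlib

open MeasureTheory Real
open Finset Matrix

noncomputable def gg (a b : ℝ) (k : ℕ) : ℝ → ℝ :=
  (Set.Icc a b).indicator fun t => t ^ k * Real.exp (-t ^ 2)

noncomputable def gm (a b : ℝ) (k : ℕ) : ℝ := ∫ t, gg a b k t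

noncomputable def gG (a b : ℝ) (n : ℕ) : (Fin n → ℝ) → ℝ := fun x =>
  (Matrix.vandermonde x).det ^ 2 *
    ∏ i, (Set.Icc a b).indicator (fun t => Real.exp (-t ^ 2)) (x i)

lemma gg_integrable (a b : ℝ) (k : ℕ) : Integrable (gg a b k) := by
  rw [gg, integrable_indicator_iff measurableSet_Icc]
  exact Continuous.integrableOn_Icc (by continuity)

lemma sign_sq {α : Type*} [DecidableEq α] [Fintype α] (σ : Equiv.Perm α) :
    ((Equiv.Perm.sign σ : ℤ) : ℝ) * ((Equiv.Perm.sign σ : ℤ) : ℝ) = 1 := by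
  rcases Int.units_eq_one_or (Equiv.Perm.sign σ) with h | h <;> simp [h]

lemma align (a b : ℝ) {n : ℕ} (σ τ : Equiv.Perm (Fin n)) (x : Fin n → ℝ) :
    (∏ i, x (σ i) ^ (i : ℕ)) * (∏ i, x (τ i) ^ (i : ℕ)) *
        ∏ i, (Set.Icc a b).indicator (fun t => Real.exp (-t ^ 2)) (x i) =
      ∏ i, gg a b ((σ⁻¹ i).1 + (τ⁻¹ i).1) (x i) := by
  have h1 : ∀ ρ : Equiv.Perm (Fin n),
      (∏ i, x (ρ i) ^ (i : ℕ)) = ∏ i, x i ^ ((ρ⁻¹ i).1) := by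
    intro ρ
    calc (∏ i, x (ρ i) ^ (i : ℕ)) = ∏ i, x (ρ i) ^ ((ρ⁻¹ (ρ i)).1) := by
          exact Finset.prod_congr rfl fun i _ => by rw [Equiv.Perm.inv_def, Equiv.symm_apply_apply]
      _ = ∏ i, x i ^ ((ρ⁻¹ i).1) := Equiv.prod_comp ρ (fun j => x j ^ ((ρ⁻¹ j).1))
  rw [h1 σ, h1 τ, ← Finset.prod_mul_distrib, ← Finset.prod_mul_distrib]
  refine Finset.prod_congr rfl fun i _ => ?_
  by_cases h : x i ∈ Set.Icc a b
  · simp only [gg, Set.indicator_of_mem h, pow_add]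
  · simp [gg, Set.indicator_of_notMem h]

lemma gG_rep (a b : ℝ) (n : ℕ) (x : Fin n → ℝ) :
    gG a b n x = ∑ σ : Equiv.Perm (Fin n), ∑ τ : Equiv.Perm (Fin n),
      (((Equiv.Perm.sign σ : ℤ) : ℝ) * ((Equiv.Perm.sign τ : ℤ) : ℝ)) *
        ∏ i, gg a b ((σ⁻¹ i).1 + (τ⁻¹ i).1) (x i) := by
  rw [gG, sq, Matrix.det_apply']
  simp only [Matrix.vandermonde_apply]
  rw [Finset.sum_mul_sum, Finset.sum_mul]
  refine Finset.sum_congr rfl fun σ _ => ?_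
  rw [Finset.sum_mul]
  refine Finset.sum_congr rfl fun τ _ => ?_
  rw [← align a b σ τ x]
  ring
lemma comb (n : ℕ) (m : ℕ → ℝ) :
    (∑ σ : Equiv.Perm (Fin n), ∑ τ : Equiv.Perm (Fin n),
      (((Equiv.Perm.sign σ : ℤ) : ℝ) * ((Equiv.Perm.sign τ : ℤ) : ℝ)) *
        ∏ i, m ((σ⁻¹ i).1 + (τ⁻¹ i).1))
      = (Nat.factorial n : ℝ) * (Matrix.of fun i j : Fin n => m (i.1 + j.1)).det := by
  set G : Equiv.Perm (Fin n) → Equiv.Perm (Fin n) → ℝ := fun σ τ =>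
    (((Equiv.Perm.sign σ : ℤ) : ℝ) * ((Equiv.Perm.sign τ : ℤ) : ℝ)) *
      ∏ i, m ((σ i).1 + (τ i).1) with hG
  have hinv : ∀ F : Equiv.Perm (Fin n) → ℝ, (∑ σ, F σ⁻¹) = ∑ σ, F σ := fun F =>
    Equiv.sum_comp (Equiv.inv (Equiv.Perm (Fin n))) F
  have step1 : (∑ σ : Equiv.Perm (Fin n), ∑ τ : Equiv.Perm (Fin n),
      (((Equiv.Perm.sign σ : ℤ) : ℝ) * ((Equiv.Perm.sign τ : ℤ) : ℝ)) *
        ∏ i, m ((σ⁻¹ i).1 + (τ⁻¹ i).1)) = ∑ σ, ∑ τ, G σ τ := by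
    calc (∑ σ : Equiv.Perm (Fin n), ∑ τ : Equiv.Perm (Fin n),
        (((Equiv.Perm.sign σ : ℤ) : ℝ) * ((Equiv.Perm.sign τ : ℤ) : ℝ)) *
          ∏ i, m ((σ⁻¹ i).1 + (τ⁻¹ i).1))
        = ∑ σ, ∑ τ, G σ⁻¹ τ⁻¹ := by
          refine Finset.sum_congr rfl fun σ _ => Finset.sum_congr rfl fun τ _ => ?_
          simp [hG, Equiv.Perm.sign_inv]
      _ = ∑ σ, ∑ τ, G σ⁻¹ τ := Finset.sum_congr rfl fun σ _ => hinv _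
      _ = ∑ σ, ∑ τ, G σ τ := hinv (fun ρ => ∑ τ, G ρ τ)
  rw [step1]
  have step2 : ∀ σ : Equiv.Perm (Fin n), (∑ τ, G σ τ)
      = ((Matrix.of fun i j : Fin n => m (i.1 + j.1))ᵀ).det := by
    intro σ
    rw [Matrix.det_apply']
    rw [← Equiv.sum_comp (Equiv.mulRight σ) (fun τ => G σ τ)]
    refine Finset.sum_congr rfl fun ρ _ => ?_
    have hprod : (∏ i, m ((σ i).1 + ((ρ * σ) i).1)) = ∏ i, m (i.1 + (ρ i).1) := by
      simp only [Equiv.Perm.mul_apply]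
      exact Equiv.prod_comp σ (fun j => m (j.1 + (ρ j).1))
    have hM : (∏ i, (Matrix.of fun i j : Fin n => m (i.1 + j.1))ᵀ (ρ i) i)
        = ∏ i, m (i.1 + (ρ i).1) := by
      refine Finset.prod_congr rfl fun i _ => ?_
      simp [Matrix.transpose_apply]
    have hsgn : (((Equiv.Perm.sign σ : ℤ) : ℝ) * ((Equiv.Perm.sign (ρ * σ) : ℤ) : ℝ))
        = ((Equiv.Perm.sign ρ : ℤ) : ℝ) := by
      rw [Equiv.Perm.sign_mul]
      push_cast
      rw [mul_comm ((Equiv.Perm.sign ρ : ℤ) : ℝ)]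
      rw [← mul_assoc, sign_sq, one_mul]
    simp only [Equiv.coe_mulRight, hG]
    rw [hprod, hM, hsgn]
  calc (∑ σ, ∑ τ, G σ τ) = ∑ _σ : Equiv.Perm (Fin n),
        ((Matrix.of fun i j : Fin n => m (i.1 + j.1))ᵀ).det :=
        Finset.sum_congr rfl fun σ _ => step2 σ
    _ = (Nat.factorial n : ℝ) * (Matrix.of fun i j : Fin n => m (i.1 + j.1)).det := by
        rw [Finset.sum_const, Finset.card_univ, Fintype.card_perm, Fintype.card_fin,
          nsmul_eq_mul, Matrix.det_transpose]

lemma term_integrable (a b : ℝ) (n : ℕ) (σ τ : Equiv.Perm (Fin n)) :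
    Integrable (fun x : Fin n → ℝ =>
      (((Equiv.Perm.sign σ : ℤ) : ℝ) * ((Equiv.Perm.sign τ : ℤ) : ℝ)) *
        ∏ i, gg a b ((σ⁻¹ i).1 + (τ⁻¹ i).1) (x i)) :=
  (Integrable.fintype_prod (f := fun i : Fin n => gg a b ((σ⁻¹ i).1 + (τ⁻¹ i).1))
    fun i => gg_integrable a b _).const_mul _

lemma gG_integrable (a b : ℝ) (n : ℕ) : Integrable (gG a b n) := by
  rw [show gG a b n = fun x => ∑ σ : Equiv.Perm (Fin n), ∑ τ : Equiv.Perm (Fin n),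
      (((Equiv.Perm.sign σ : ℤ) : ℝ) * ((Equiv.Perm.sign τ : ℤ) : ℝ)) *
        ∏ i, gg a b ((σ⁻¹ i).1 + (τ⁻¹ i).1) (x i) from funext (gG_rep a b n)]
  exact integrable_finset_sum _ fun σ _ => integrable_finset_sum _ fun τ _ =>
    term_integrable a b n σ τ

lemma cube (a b : ℝ) (n : ℕ) :
    (∫ x : Fin n → ℝ, gG a b n x)
      = (Nat.factorial n : ℝ) * (Matrix.of fun i j : Fin n => gm a b (i.1 + j.1)).det := by
  simp only [gG_rep]
  rw [integral_finset_sum _ fun σ _ => integrable_finset_sum _ fun τ _ =>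
    term_integrable a b n σ τ]
  rw [← comb n (gm a b)]
  refine Finset.sum_congr rfl fun σ _ => ?_
  rw [integral_finset_sum _ fun τ _ => term_integrable a b n σ τ]
  refine Finset.sum_congr rfl fun τ _ => ?_
  rw [integral_const_mul]
  congr 1
  rw [MeasureTheory.integral_fintype_prod_volume_eq_prod (ι := Fin n)
    (f := fun i => gg a b ((σ⁻¹ i).1 + (τ⁻¹ i).1))]
  exact Finset.prod_congr rfl fun i _ => rfl

def TT (n : ℕ) (σ : Equiv.Perm (Fin n)) : Set (Fin n → ℝ) :=
  {x | ∀ i j : Fin n, i < j → x (σ j) < x (σ i)}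

lemma TT_meas (n : ℕ) (σ : Equiv.Perm (Fin n)) : MeasurableSet (TT n σ) := by
  have : TT n σ = ⋂ (i : Fin n), ⋂ (j : Fin n), ⋂ (_ : i < j),
      {x : Fin n → ℝ | x (σ j) < x (σ i)} := by
    ext x; simp [TT, Set.mem_iInter]
  rw [this]
  exact MeasurableSet.iInter fun i => MeasurableSet.iInter fun j =>
    MeasurableSet.iInter fun _ =>
      measurableSet_lt (measurable_pi_apply _) (measurable_pi_apply _)

lemma TT_eq_of_mem {n : ℕ} {x : Fin n → ℝ} {σ τ : Equiv.Perm (Fin n)}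
    (hσ : x ∈ TT n σ) (hτ : x ∈ TT n τ) : σ = τ := by
  have hmono : ∀ ρ : Equiv.Perm (Fin n), x ∈ TT n ρ →
      Monotone (x ∘ ⇑(ρ * (Fin.revPerm : Equiv.Perm (Fin n)))) := by
    intro ρ hρ i j hij
    rcases eq_or_lt_of_le hij with rfl | h
    · exact le_rfl
    · have hr : Fin.rev j < Fin.rev i := Fin.rev_lt_rev.mpr h
      exact le_of_lt (hρ _ _ hr)
  have heq := Tuple.unique_monotone (hmono σ hσ) (hmono τ hτ)
  have hanti : StrictAnti (fun i => x (σ i)) := fun i j hij => hσ i j hij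
  have hxinj : Function.Injective x := by
    intro p q hpq
    have h1 : x (σ (σ⁻¹ p)) = x (σ (σ⁻¹ q)) := by
      simpa [Equiv.Perm.inv_def, Equiv.apply_symm_apply] using hpq
    have h2 : (σ⁻¹ p : Fin n) = σ⁻¹ q := hanti.injective h1
    simpa using congrArg σ h2
  apply Equiv.ext
  intro j
  have h3 := congrFun heq (Fin.rev j)
  simp only [Function.comp_apply, Equiv.Perm.mul_apply, Fin.revPerm_apply,
    Fin.rev_rev] at h3
  exact hxinj h3

lemma TT_cover {n : ℕ} {x : Fin n → ℝ} (hx : Function.Injective x) :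
    ∃ σ : Equiv.Perm (Fin n), x ∈ TT n σ := by
  have hmono := Tuple.monotone_sort x
  have hsm : StrictMono (x ∘ ⇑(Tuple.sort x)) :=
    hmono.strictMono_of_injective (hx.comp (Equiv.injective _))
  refine ⟨Tuple.sort x * (Fin.revPerm : Equiv.Perm (Fin n)), fun i j hij => ?_⟩
  have hr : Fin.rev j < Fin.rev i := Fin.rev_lt_rev.mpr hij
  simpa [Equiv.Perm.mul_apply] using hsm hr

lemma dnull (n : ℕ) :
    (volume : Measure (Fin n → ℝ)) {x | ¬ Function.Injective x} = 0 := by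
  have hsub : {x : Fin n → ℝ | ¬ Function.Injective x} ⊆
      ⋃ (i : Fin n), ⋃ (j : Fin n), ⋃ (_ : i ≠ j), {x : Fin n → ℝ | x i = x j} := by
    intro x hx
    simp only [Set.mem_setOf_eq, Function.Injective, not_forall] at hx
    obtain ⟨i, j, hij, hne⟩ := hx
    simp only [Set.mem_iUnion]
    exact ⟨i, j, hne, hij⟩
  refine measure_mono_null hsub (measure_iUnion_null fun i =>
    measure_iUnion_null fun j => measure_iUnion_null fun hij => ?_)
  have hker : {x : Fin n → ℝ | x i = x j} =
      (LinearMap.ker ((LinearMap.proj i : (Fin n → ℝ) →ₗ[ℝ] ℝ) - LinearMap.proj j) :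
        Set (Fin n → ℝ)) := by
    ext x
    simp [LinearMap.mem_ker, sub_eq_zero]
  rw [hker]
  refine Measure.addHaar_submodule _ _ ?_
  intro htop
  have hmem : (Pi.single i 1 : Fin n → ℝ) ∈
      LinearMap.ker ((LinearMap.proj i : (Fin n → ℝ) →ₗ[ℝ] ℝ) - LinearMap.proj j) := by
    rw [htop]; trivial
  rw [LinearMap.mem_ker] at hmem
  simp [Pi.single_eq_same, Pi.single_eq_of_ne (Ne.symm hij)] at hmem

lemma gG_symm (a b : ℝ) (n : ℕ) (σ : Equiv.Perm (Fin n)) (x : Fin n → ℝ) :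
    gG a b n (fun i => x (σ i)) = gG a b n x := by
  unfold gG
  have h2 : (∏ i, (Set.Icc a b).indicator (fun t => Real.exp (-t ^ 2)) (x (σ i)))
      = ∏ i, (Set.Icc a b).indicator (fun t => Real.exp (-t ^ 2)) (x i) :=
    Equiv.prod_comp σ (fun i => (Set.Icc a b).indicator (fun t => Real.exp (-t ^ 2)) (x i))
  have h1 : Matrix.vandermonde (fun i => x (σ i)) =
      (Matrix.vandermonde x).submatrix σ id := by
    ext i j
    simp [Matrix.vandermonde]
  rw [h1, h2, Matrix.det_permute, mul_pow]
  have : ((Equiv.Perm.sign σ : ℤ) : ℝ) ^ 2 = 1 := by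
    rw [sq, sign_sq]
  rw [this, one_mul]

lemma TT_transfer (a b : ℝ) (n : ℕ) (σ : Equiv.Perm (Fin n)) :
    (∫ x in TT n σ, gG a b n x) = ∫ x in TT n 1, gG a b n x := by
  set Φ := MeasurableEquiv.piCongrLeft (fun _ : Fin n => ℝ) σ.symm with hΦdef
  have hΦ : MeasurePreserving Φ volume volume :=
    volume_measurePreserving_piCongrLeft _ σ.symm
  have hΦx : ∀ (x : Fin n → ℝ) (i : Fin n), Φ x i = x (σ i) := by
    intro x i
    have h := Equiv.piCongrLeft_apply_apply (fun _ : Fin n => ℝ) σ.symm x (σ i)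
    simpa [hΦdef, MeasurableEquiv.coe_piCongrLeft] using h
  have hpre : Φ ⁻¹' (TT n 1) = TT n σ := by
    ext x
    simp only [Set.mem_preimage, TT, Set.mem_setOf_eq, hΦx, Equiv.Perm.coe_one, id_eq]
  calc (∫ x in TT n σ, gG a b n x)
      = ∫ x in Φ ⁻¹' (TT n 1), gG a b n (Φ x) := by
        rw [hpre]
        refine integral_congr_ae (Filter.Eventually.of_forall fun x => ?_)
        show gG a b n x = gG a b n (Φ x)
        rw [show Φ x = fun i => x (σ i) from funext (hΦx x), gG_symm]
    _ = ∫ y in TT n 1, gG a b n y :=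
        hΦ.setIntegral_preimage_emb (MeasurableEquiv.measurableEmbedding Φ) _ _

lemma sym (a b : ℝ) (n : ℕ) :
    (∫ x : Fin n → ℝ, gG a b n x)
      = (Nat.factorial n : ℝ) * ∫ x in TT n 1, gG a b n x := by
  set U : Set (Fin n → ℝ) := ⋃ σ ∈ (Finset.univ : Finset (Equiv.Perm (Fin n))), TT n σ
    with hU
  have hUmeas : MeasurableSet U :=
    Finset.measurableSet_biUnion _ fun σ _ => TT_meas n σ
  have hcompl : (volume : Measure (Fin n → ℝ)) Uᶜ = 0 := by
    refine measure_mono_null (fun x hx => ?_) (dnull n)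
    simp only [Set.mem_compl_iff, hU, Set.mem_iUnion, Finset.mem_univ] at hx
    push_neg at hx
    intro hinj
    obtain ⟨σ, hσ⟩ := TT_cover hinj
    exact hx σ (by trivial) hσ
  have hsplit : (∫ x : Fin n → ℝ, gG a b n x) = ∫ x in U, gG a b n x := by
    rw [← integral_add_compl hUmeas (gG_integrable a b n)]
    have : (∫ x in Uᶜ, gG a b n x) = 0 := by
      rw [Measure.restrict_eq_zero.mpr hcompl, integral_zero_measure]
    rw [this, add_zero]
  rw [hsplit, hU, integral_biUnion_finset _ (fun σ _ => TT_meas n σ)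
    (fun σ _ τ _ hne => Set.disjoint_left.mpr fun x hxσ hxτ => hne (TT_eq_of_mem hxσ hxτ))
    (fun σ _ => (gG_integrable a b n).integrableOn)]
  calc (∑ σ : Equiv.Perm (Fin n), ∫ x in TT n σ, gG a b n x)
      = ∑ _σ : Equiv.Perm (Fin n), ∫ x in TT n 1, gG a b n x :=
        Finset.sum_congr rfl fun σ _ => TT_transfer a b n σ
    _ = (Nat.factorial n : ℝ) * ∫ x in TT n 1, gG a b n x := by
        rw [Finset.sum_const, Finset.card_univ, Fintype.card_perm, Fintype.card_fin,
          nsmul_eq_mul]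

/-- For the `n×n` GUE, whose ordered-eigenvalue joint density is
`K_GUE ∏_{i<j}(xᵢ−xⱼ)² ∏ᵢ e^(−xᵢ²)` with
`K_GUE = 2^(n(n−1)/2) / (π^(n/2) ∏_{i=1}^n Γ(i))`, the probability that all
eigenvalues lie in `[a,b]` equals `K_GUE · det A(a,b)`, where
`a_{i,j} = ∫ₐᵇ t^(i+j−2) e^(−t²) dt`. -/
theorem gue_psi (n : ℕ) (a b : ℝ) (hab : a ≤ b) :
    (∫ x in {x : Fin n → ℝ | (∀ i j : Fin n, i ≤ j → x j ≤ x i) ∧ ∀ i, x i ∈ Set.Icc a b},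
      (2 : ℝ) ^ (n * (n - 1) / 2) /
          (Real.pi ^ ((n : ℝ) / 2) * ∏ i ∈ Finset.range n, Real.Gamma ((i : ℝ) + 1)) *
        ((∏ i : Fin n, ∏ j ∈ Finset.Ioi i, (x i - x j)) ^ 2 *
          ∏ i, Real.exp (-(x i) ^ 2))) =
      ((2 : ℝ) ^ (n * (n - 1) / 2) /
          (Real.pi ^ ((n : ℝ) / 2) * ∏ i ∈ Finset.range n, Real.Gamma ((i : ℝ) + 1))) *
        (Matrix.of fun i j : Fin n =>
          ∫ t in a..b, t ^ (i.1 + j.1) * Real.exp (-t ^ 2)).det := by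
  have hM : (Matrix.of fun i j : Fin n => gm a b (i.1 + j.1)) =
      Matrix.of fun i j : Fin n => ∫ t in a..b, t ^ (i.1 + j.1) * Real.exp (-t ^ 2) := by
    ext i j
    simp only [Matrix.of_apply]
    rw [gm, gg, integral_indicator measurableSet_Icc, integral_Icc_eq_integral_Ioc,
      ← intervalIntegral.integral_of_le hab]
  have hfac : (Nat.factorial n : ℝ) ≠ 0 := Nat.cast_ne_zero.mpr (Nat.factorial_ne_zero n)
  have hTT1 : (∫ x in TT n 1, gG a b n x)
      = (Matrix.of fun i j : Fin n => gm a b (i.1 + j.1)).det :=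
    mul_left_cancel₀ hfac (by rw [← sym a b n, cube a b n])
  set box : Set (Fin n → ℝ) := {y | ∀ i, y i ∈ Set.Icc a b} with hbox
  have hboxmeas : MeasurableSet box := by
    have h : box = ⋂ i : Fin n, (fun y : Fin n → ℝ => y i) ⁻¹' (Set.Icc a b) := by
      ext y; simp [hbox, Set.mem_iInter]
    rw [h]
    exact MeasurableSet.iInter fun i => (measurable_pi_apply i) measurableSet_Icc
  have hGind : ∀ x : Fin n → ℝ, gG a b n x =
      box.indicator (fun y => (Matrix.vandermonde y).det ^ 2 *
        ∏ i, Real.exp (-(y i) ^ 2)) x := by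
    intro x
    by_cases h : x ∈ box
    · rw [Set.indicator_of_mem h, gG]
      congr 1
      exact Finset.prod_congr rfl fun i _ => Set.indicator_of_mem (h i) _
    · rw [Set.indicator_of_notMem h, gG]
      have hx : ∃ i, x i ∉ Set.Icc a b := by simpa [hbox] using h
      obtain ⟨i, hi⟩ := hx
      rw [Finset.prod_eq_zero (Finset.mem_univ i) (Set.indicator_of_notMem hi _), mul_zero]
  set tb : Set (Fin n → ℝ) := TT n 1 ∩ box with htb
  have hae : {x : Fin n → ℝ | (∀ i j : Fin n, i ≤ j → x j ≤ x i) ∧ ∀ i, x i ∈ Set.Icc a b}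
      =ᵐ[(volume : Measure (Fin n → ℝ))] tb := by
    rw [htb]
    rw [MeasureTheory.ae_eq_set]
    constructor
    · refine measure_mono_null (fun x hx => ?_) (dnull n)
      obtain ⟨⟨hord, hbx⟩, hnot⟩ := hx
      simp only [Set.mem_setOf_eq, Set.mem_inter_iff, not_and] at hnot ⊢
      intro hinj
      have hnT : x ∉ TT n 1 := fun hT => hnot hT hbx
      simp only [TT, Set.mem_setOf_eq, Equiv.Perm.coe_one, id_eq, not_forall] at hnT
      obtain ⟨i, j, hij, hge⟩ := hnT
      have hle : x j ≤ x i := hord i j (le_of_lt hij)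
      have heq : x i = x j := le_antisymm (not_lt.mp hge) hle
      exact absurd (hinj heq) (ne_of_gt hij).symm
    · have h : (TT n 1 ∩ box) \
          {x : Fin n → ℝ | (∀ i j : Fin n, i ≤ j → x j ≤ x i) ∧ ∀ i, x i ∈ Set.Icc a b}
          = (∅ : Set (Fin n → ℝ)) := by
        refine Set.eq_empty_iff_forall_notMem.mpr fun x hx => ?_
        obtain ⟨⟨hT, hbx⟩, hns⟩ := hx
        refine hns ⟨fun i j hij => ?_, hbx⟩
        rcases eq_or_lt_of_le hij with rfl | h'
        · exact le_rfl
        · exact le_of_lt (hT i j h')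
      rw [h]
      simp
  have hsq : ∀ x : Fin n → ℝ, (∏ i : Fin n, ∏ j ∈ Finset.Ioi i, (x i - x j)) ^ 2
      = (Matrix.vandermonde x).det ^ 2 := by
    intro x
    rw [Matrix.det_vandermonde, ← Finset.prod_pow, ← Finset.prod_pow]
    refine Finset.prod_congr rfl fun i _ => ?_
    rw [← Finset.prod_pow, ← Finset.prod_pow]
    exact Finset.prod_congr rfl fun j _ => by ring
  rw [integral_const_mul]
  congr 1
  calc (∫ x in {x : Fin n → ℝ | (∀ i j : Fin n, i ≤ j → x j ≤ x i) ∧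
          ∀ i, x i ∈ Set.Icc a b},
        (∏ i : Fin n, ∏ j ∈ Finset.Ioi i, (x i - x j)) ^ 2 * ∏ i, Real.exp (-(x i) ^ 2))
      = ∫ x in {x : Fin n → ℝ | (∀ i j : Fin n, i ≤ j → x j ≤ x i) ∧
          ∀ i, x i ∈ Set.Icc a b},
        (Matrix.vandermonde x).det ^ 2 * ∏ i, Real.exp (-(x i) ^ 2) := by
        refine integral_congr_ae (Filter.Eventually.of_forall fun x => ?_)
        simp only [hsq]
    _ = ∫ x in tb,
          (Matrix.vandermonde x).det ^ 2 * ∏ i, Real.exp (-(x i) ^ 2) :=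
        setIntegral_congr_set hae
    _ = ∫ x in TT n 1 ∩ box,
          (Matrix.vandermonde x).det ^ 2 * ∏ i, Real.exp (-(x i) ^ 2) := by rw [htb]
    _ = ∫ x in TT n 1, gG a b n x := by
        rw [← setIntegral_indicator hboxmeas]
        refine integral_congr_ae (Filter.Eventually.of_forall fun x => ?_)
        show box.indicator (fun y => (Matrix.vandermonde y).det ^ 2 *
          ∏ i, Real.exp (-(y i) ^ 2)) x = gG a b n x
        exact (hGind x).symm
    _ = (Matrix.of fun i j : Fin n =>
          ∫ t in a..b, t ^ (i.1 + j.1) * Real.exp (-t ^ 2)).det := by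
        rw [hTT1, hM]
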